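/- Suppose Φ is 𝒟-pullback asymptotically compact in X. Then for every D ∈ 𝒟, ω₁ ∈ Ω₁ and ω₂ ∈ Ω₂, the Ω-limit set Ω(D,ω₁,ω₂) is nonempty and compact, and it pullback attracts D, i.e. lim_{t→∞} d_H(Φ(t,θ₁(−t)ω₁,θ₂(−t)ω₂,D(θ₁(−t)ω₁,θ₂(−t)ω₂)), Ω(D,ω₁,ω₂)) = 0, where d_H(C,B)=sup_{x∈C} inf_{b∈B} d(x,b) is the Hausdorff semi-metric. -/

import Mathlib

open MeasureTheory Filter Set Topology
open scoped ENNReal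

namespace RDS

/-- A group of transformations of `α` parametrized by `ℝ`. -/
def IsGroupAction {α : Type*} (θ : ℝ → α → α) : Prop :=
  (∀ a, θ 0 a = a) ∧ ∀ s t : ℝ, ∀ a, θ (s + t) a = θ t (θ s a)

variable {Ω₁ Ω₂ X : Type*} [MetricSpace X] [MeasurableSpace X] [MeasurableSpace Ω₂]

/-- A continuous cocycle on `X` over the parametric dynamical systems
`(Ω₁, θ₁)` and `(Ω₂, ℱ₂, P, θ₂)` (Definition 2.1). -/
structure IsCocycle (θ₁ : ℝ → Ω₁ → Ω₁) (θ₂ : ℝ → Ω₂ → Ω₂)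
    (Φ : ℝ → Ω₁ → Ω₂ → X → X) : Prop where
  measurable : ∀ ω₁ : Ω₁,
    Measurable fun p : {t : ℝ // 0 ≤ t} × Ω₂ × X => Φ p.1.1 ω₁ p.2.1 p.2.2
  map_zero : ∀ (ω₁ : Ω₁) (ω₂ : Ω₂) (x : X), Φ 0 ω₁ ω₂ x = x
  cocycle : ∀ t τ : ℝ, 0 ≤ t → 0 ≤ τ → ∀ (ω₁ : Ω₁) (ω₂ : Ω₂) (x : X),
    Φ (t + τ) ω₁ ω₂ x = Φ t (θ₁ τ ω₁) (θ₂ τ ω₂) (Φ τ ω₁ ω₂ x)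
  continuous : ∀ t : ℝ, 0 ≤ t → ∀ (ω₁ : Ω₁) (ω₂ : Ω₂),
    Continuous fun x : X => Φ t ω₁ ω₂ x

/-- A complete orbit of the cocycle `Φ` (Definition 2.9). -/
def IsCompleteOrbit (θ₁ : ℝ → Ω₁ → Ω₁) (θ₂ : ℝ → Ω₂ → Ω₂)
    (Φ : ℝ → Ω₁ → Ω₂ → X → X) (ψ : ℝ → Ω₁ → Ω₂ → X) : Prop :=
  ∀ t τ : ℝ, 0 ≤ t → ∀ (ω₁ : Ω₁) (ω₂ : Ω₂),
    Φ t (θ₁ τ ω₁) (θ₂ τ ω₂) (ψ τ ω₁ ω₂) = ψ (t + τ) ω₁ ω₂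

/-- A `𝒟`-complete orbit of `Φ`. -/
def IsDCompleteOrbit (θ₁ : ℝ → Ω₁ → Ω₁) (θ₂ : ℝ → Ω₂ → Ω₂)
    (Φ : ℝ → Ω₁ → Ω₂ → X → X) (𝒟 : Set (Ω₁ → Ω₂ → Set X))
    (ψ : ℝ → Ω₁ → Ω₂ → X) : Prop :=
  IsCompleteOrbit θ₁ θ₂ Φ ψ ∧
    ∃ D ∈ 𝒟, ∀ (t : ℝ) (ω₁ : Ω₁) (ω₂ : Ω₂), ψ t ω₁ ω₂ ∈ D (θ₁ t ω₁) (θ₂ t ω₂)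

/-- Positive invariance of a family under `Φ`. -/
def PositivelyInvariant (θ₁ : ℝ → Ω₁ → Ω₁) (θ₂ : ℝ → Ω₂ → Ω₂)
    (Φ : ℝ → Ω₁ → Ω₂ → X → X) (B : Ω₁ → Ω₂ → Set X) : Prop :=
  ∀ t : ℝ, 0 ≤ t → ∀ (ω₁ : Ω₁) (ω₂ : Ω₂),
    Φ t ω₁ ω₂ '' B ω₁ ω₂ ⊆ B (θ₁ t ω₁) (θ₂ t ω₂)

/-- Invariance of a family under `Φ`. -/
def Invariant (θ₁ : ℝ → Ω₁ → Ω₁) (θ₂ : ℝ → Ω₂ → Ω₂)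
    (Φ : ℝ → Ω₁ → Ω₂ → X → X) (B : Ω₁ → Ω₂ → Set X) : Prop :=
  ∀ t : ℝ, 0 ≤ t → ∀ (ω₁ : Ω₁) (ω₂ : Ω₂),
    Φ t ω₁ ω₂ '' B ω₁ ω₂ = B (θ₁ t ω₁) (θ₂ t ω₂)

/-- Quasi-invariance of a family under `Φ`. -/
def QuasiInvariant (θ₁ : ℝ → Ω₁ → Ω₁) (θ₂ : ℝ → Ω₂ → Ω₂)
    (Φ : ℝ → Ω₁ → Ω₂ → X → X) (B : Ω₁ → Ω₂ → Set X) : Prop :=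
  ∀ y : Ω₁ → Ω₂ → X, (∀ (ω₁ : Ω₁) (ω₂ : Ω₂), y ω₁ ω₂ ∈ B ω₁ ω₂) →
    ∃ ψ : ℝ → Ω₁ → Ω₂ → X, IsCompleteOrbit θ₁ θ₂ Φ ψ ∧
      (∀ (ω₁ : Ω₁) (ω₂ : Ω₂), ψ 0 ω₁ ω₂ = y ω₁ ω₂) ∧
      ∀ (t : ℝ) (ω₁ : Ω₁) (ω₂ : Ω₂), ψ t ω₁ ω₂ ∈ B (θ₁ t ω₁) (θ₂ t ω₂)

/-- The Ω-limit set of a family `B` (Definition 2.13). -/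
def omegaLimit (θ₁ : ℝ → Ω₁ → Ω₁) (θ₂ : ℝ → Ω₂ → Ω₂)
    (Φ : ℝ → Ω₁ → Ω₂ → X → X) (B : Ω₁ → Ω₂ → Set X) (ω₁ : Ω₁) (ω₂ : Ω₂) : Set X :=
  ⋂ τ ∈ Ici (0 : ℝ), closure (⋃ t ∈ Ici τ,
    Φ t (θ₁ (-t) ω₁) (θ₂ (-t) ω₂) '' B (θ₁ (-t) ω₁) (θ₂ (-t) ω₂))

/-- `𝒟` is a collection of families of nonempty subsets of `X`. -/
def FamiliesOfNonemptySets (𝒟 : Set (Ω₁ → Ω₂ → Set X)) : Prop :=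
  ∀ D ∈ 𝒟, ∀ (ω₁ : Ω₁) (ω₂ : Ω₂), (D ω₁ ω₂).Nonempty

/-- Neighborhood closedness of the collection `𝒟` (Definition 2.5). -/
def NeighborhoodClosed (𝒟 : Set (Ω₁ → Ω₂ → Set X)) : Prop :=
  ∀ D ∈ 𝒟, ∃ ε : ℝ, 0 < ε ∧ ∀ B : Ω₁ → Ω₂ → Set X,
    (∀ (ω₁ : Ω₁) (ω₂ : Ω₂), (B ω₁ ω₂).Nonempty ∧
      B ω₁ ω₂ ⊆ Metric.thickening ε (D ω₁ ω₂)) → B ∈ 𝒟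

/-- Inclusion closedness of the collection `𝒟`. -/
def InclusionClosed (𝒟 : Set (Ω₁ → Ω₂ → Set X)) : Prop :=
  ∀ D ∈ 𝒟, ∀ B : Ω₁ → Ω₂ → Set X,
    (∀ (ω₁ : Ω₁) (ω₂ : Ω₂), (B ω₁ ω₂).Nonempty ∧ B ω₁ ω₂ ⊆ D ω₁ ω₂) → B ∈ 𝒟

/-- `𝒟`-pullback asymptotic compactness of `Φ` (Definition 2.16). -/
def AsymptoticallyCompact (θ₁ : ℝ → Ω₁ → Ω₁) (θ₂ : ℝ → Ω₂ → Ω₂)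
    (Φ : ℝ → Ω₁ → Ω₂ → X → X) (𝒟 : Set (Ω₁ → Ω₂ → Set X)) : Prop :=
  ∀ (ω₁ : Ω₁) (ω₂ : Ω₂), ∀ B ∈ 𝒟, ∀ (t : ℕ → ℝ) (x : ℕ → X),
    Tendsto t atTop atTop →
    (∀ n, x n ∈ B (θ₁ (-t n) ω₁) (θ₂ (-t n) ω₂)) →
    ∃ (φ : ℕ → ℕ) (y : X), StrictMono φ ∧
      Tendsto (fun n => Φ (t (φ n)) (θ₁ (-t (φ n)) ω₁) (θ₂ (-t (φ n)) ω₂) (x (φ n)))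
        atTop (𝓝 y)

/-- The Hausdorff semi-metric `d(C,B) = sup_{x ∈ C} inf_{b ∈ B} d(x,b)`,
valued in `ℝ≥0∞`. -/
noncomputable def hausSemidist (C B : Set X) : ℝ≥0∞ :=
  ⨆ x ∈ C, EMetric.infEdist x B

/-- The family `A` pullback attracts the family `B` under `Φ`. -/
def Attracts (θ₁ : ℝ → Ω₁ → Ω₁) (θ₂ : ℝ → Ω₂ → Ω₂)
    (Φ : ℝ → Ω₁ → Ω₂ → X → X) (B A : Ω₁ → Ω₂ → Set X) : Prop :=
  ∀ (ω₁ : Ω₁) (ω₂ : Ω₂),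
    Tendsto (fun t : ℝ => hausSemidist
        (Φ t (θ₁ (-t) ω₁) (θ₂ (-t) ω₂) '' B (θ₁ (-t) ω₁) (θ₂ (-t) ω₂)) (A ω₁ ω₂))
      atTop (𝓝 0)

/-- A `𝒟`-pullback absorbing set for `Φ` (Definition 2.15). -/
def IsAbsorbingSet (θ₁ : ℝ → Ω₁ → Ω₁) (θ₂ : ℝ → Ω₂ → Ω₂)
    (Φ : ℝ → Ω₁ → Ω₂ → X → X) (𝒟 : Set (Ω₁ → Ω₂ → Set X))
    (K : Ω₁ → Ω₂ → Set X) : Prop :=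
  K ∈ 𝒟 ∧ ∀ (ω₁ : Ω₁) (ω₂ : Ω₂), ∀ B ∈ 𝒟, ∃ T : ℝ, 0 < T ∧ ∀ t : ℝ, T ≤ t →
    Φ t (θ₁ (-t) ω₁) (θ₂ (-t) ω₂) '' B (θ₁ (-t) ω₁) (θ₂ (-t) ω₂) ⊆ K ω₁ ω₂

/-- A closed measurable (w.r.t. the `P`-completion of `ℱ₂`) `𝒟`-pullback
absorbing set for `Φ`. -/
def IsClosedMeasurableAbsorbingSet (θ₁ : ℝ → Ω₁ → Ω₁) (θ₂ : ℝ → Ω₂ → Ω₂)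
    (Φ : ℝ → Ω₁ → Ω₂ → X → X) (P : Measure Ω₂) (𝒟 : Set (Ω₁ → Ω₂ → Set X))
    (K : Ω₁ → Ω₂ → Set X) : Prop :=
  IsAbsorbingSet θ₁ θ₂ Φ 𝒟 K ∧
    (∀ (ω₁ : Ω₁) (ω₂ : Ω₂), IsClosed (K ω₁ ω₂) ∧ (K ω₁ ω₂).Nonempty) ∧
    ∀ (ω₁ : Ω₁) (x : X), NullMeasurable (fun ω₂ => Metric.infDist x (K ω₁ ω₂)) P

/-- A `𝒟`-pullback attractor for `Φ` (Definition 2.17). -/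
structure IsPullbackAttractor (θ₁ : ℝ → Ω₁ → Ω₁) (θ₂ : ℝ → Ω₂ → Ω₂)
    (Φ : ℝ → Ω₁ → Ω₂ → X → X) (P : Measure Ω₂) (𝒟 : Set (Ω₁ → Ω₂ → Set X))
    (A : Ω₁ → Ω₂ → Set X) : Prop where
  mem : A ∈ 𝒟
  compact : ∀ (ω₁ : Ω₁) (ω₂ : Ω₂), IsCompact (A ω₁ ω₂)
  measurable : ∀ (ω₁ : Ω₁) (x : X),
    NullMeasurable (fun ω₂ => Metric.infDist x (A ω₁ ω₂)) P
  invariant : Invariant θ₁ θ₂ Φ A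
  attracts : ∀ B ∈ 𝒟, Attracts θ₁ θ₂ Φ B A

theorem omegaLimit_nonempty_compact_attracts
    {Ω₁ Ω₂ X : Type*} [Nonempty Ω₁]
    [MetricSpace X] [CompleteSpace X] [SecondCountableTopology X]
    [MeasurableSpace X] [BorelSpace X]
    [MeasurableSpace Ω₂] (P : Measure Ω₂) [IsProbabilityMeasure P]
    (θ₁ : ℝ → Ω₁ → Ω₁) (θ₂ : ℝ → Ω₂ → Ω₂)
    (hθ₁ : IsGroupAction θ₁) (hθ₂ : IsGroupAction θ₂)
    (hθ₂meas : Measurable fun p : ℝ × Ω₂ => θ₂ p.1 p.2)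
    (hθ₂pres : ∀ t : ℝ, MeasurePreserving (θ₂ t) P P)
    (Φ : ℝ → Ω₁ → Ω₂ → X → X)
    (hΦ : IsCocycle θ₁ θ₂ Φ)
    (𝒟 : Set (Ω₁ → Ω₂ → Set X))
    (h𝒟ne : FamiliesOfNonemptySets 𝒟)
    (hac : AsymptoticallyCompact θ₁ θ₂ Φ 𝒟) :
    ∀ D ∈ 𝒟, ∀ (ω₁ : Ω₁) (ω₂ : Ω₂),
      (omegaLimit θ₁ θ₂ Φ D ω₁ ω₂).Nonempty ∧
      IsCompact (omegaLimit θ₁ θ₂ Φ D ω₁ ω₂) ∧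
      Tendsto (fun t : ℝ => hausSemidist
          (Φ t (θ₁ (-t) ω₁) (θ₂ (-t) ω₂) '' D (θ₁ (-t) ω₁) (θ₂ (-t) ω₂))
          (omegaLimit θ₁ θ₂ Φ D ω₁ ω₂))
        atTop (𝓝 0) := by
  intro D hD ω₁ ω₂
  set F : ℝ → Set X :=
    fun t => Φ t (θ₁ (-t) ω₁) (θ₂ (-t) ω₂) '' D (θ₁ (-t) ω₁) (θ₂ (-t) ω₂) with hF
  set S : Set X := omegaLimit θ₁ θ₂ Φ D ω₁ ω₂ with hS
  -- membership criterion: limits of orbits starting in `D` along `tₙ → ∞` lie in `S`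
  have mem_omega : ∀ (t : ℕ → ℝ) (x : ℕ → X) (y : X),
      Tendsto t atTop atTop →
      (∀ n, x n ∈ D (θ₁ (-t n) ω₁) (θ₂ (-t n) ω₂)) →
      Tendsto (fun n => Φ (t n) (θ₁ (-t n) ω₁) (θ₂ (-t n) ω₂) (x n)) atTop (𝓝 y) →
      y ∈ S := by
    intro t x y ht hx hy
    simp only [hS, omegaLimit, mem_iInter]
    intro τ _
    refine mem_closure_of_tendsto hy ?_
    filter_upwards [ht.eventually_ge_atTop τ] with n hn
    exact mem_biUnion hn ⟨x n, hx n, rfl⟩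
  -- a selection lemma used both for compactness and nonemptiness is not needed;
  -- prove the three parts.
  have hne : S.Nonempty := by
    have hxsel : ∀ n : ℕ, ∃ x : X, x ∈ D (θ₁ (-(n : ℝ)) ω₁) (θ₂ (-(n : ℝ)) ω₂) :=
      fun n => h𝒟ne D hD _ _
    choose x hx using hxsel
    obtain ⟨φ, y, hφ, hy⟩ := hac ω₁ ω₂ D hD (fun n => (n : ℝ)) x
      tendsto_natCast_atTop_atTop hx
    exact ⟨y, mem_omega (fun n => ((φ n : ℕ) : ℝ)) (fun n => x (φ n)) y
      (tendsto_natCast_atTop_atTop.comp hφ.tendsto_atTop) (fun n => hx (φ n)) hy⟩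
  have hcl : IsClosed S := by
    simp only [hS, omegaLimit]
    exact isClosed_biInter fun _ _ => isClosed_closure
  have hseq : IsSeqCompact S := by
    intro y hy
    have hsel : ∀ n : ℕ, ∃ (s : ℝ) (x : X), (n : ℝ) ≤ s ∧
        x ∈ D (θ₁ (-s) ω₁) (θ₂ (-s) ω₂) ∧
        dist (y n) (Φ s (θ₁ (-s) ω₁) (θ₂ (-s) ω₂) x) < 1 / (n + 1) := by
      intro n
      have hyn : y n ∈ closure (⋃ t ∈ Ici ((n : ℝ)), F t) := by
        have := hy n
        simp only [hS, omegaLimit, mem_iInter] at this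
        exact this (n : ℝ) (mem_Ici.mpr (Nat.cast_nonneg n))
      have hpos : (0 : ℝ) < 1 / (n + 1) := by positivity
      obtain ⟨b, hb, hbd⟩ := Metric.mem_closure_iff.mp hyn _ hpos
      simp only [mem_iUnion, mem_Ici] at hb
      obtain ⟨s, hs, hbF⟩ := hb
      obtain ⟨x, hxD, rfl⟩ := hbF
      exact ⟨s, x, hs, hxD, hbd⟩
    choose t x h1 h2 h3 using hsel
    have ht : Tendsto t atTop atTop :=
      tendsto_atTop_mono h1 tendsto_natCast_atTop_atTop
    obtain ⟨φ, w, hφ, hz⟩ := hac ω₁ ω₂ D hD t x ht h2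
    have hwS : w ∈ S := mem_omega (fun n => t (φ n)) (fun n => x (φ n)) w
      (ht.comp hφ.tendsto_atTop) (fun n => h2 (φ n)) hz
    refine ⟨w, hwS, φ, hφ, ?_⟩
    have hdist : Tendsto (fun n => dist
        (Φ (t (φ n)) (θ₁ (-t (φ n)) ω₁) (θ₂ (-t (φ n)) ω₂) (x (φ n))) (y (φ n)))
        atTop (𝓝 0) := by
      refine squeeze_zero (fun n => dist_nonneg) (fun n => ?_)
        tendsto_one_div_add_atTop_nhds_zero_nat
      rw [dist_comm]
      refine le_trans (h3 (φ n)).le ?_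
      have : (n : ℝ) + 1 ≤ (φ n : ℝ) + 1 := by
        exact_mod_cast Nat.succ_le_succ hφ.le_apply
      exact one_div_le_one_div_of_le (by positivity) this
    exact hz.congr_dist hdist
  refine ⟨hne, hseq.isCompact, ?_⟩
  by_contra hcon
  rw [ENNReal.tendsto_nhds_zero] at hcon
  push_neg at hcon
  obtain ⟨ε, hε, hfreq⟩ := hcon
  have hfr := Filter.frequently_atTop.mp hfreq
  have hsel : ∀ n : ℕ, ∃ (s : ℝ) (x : X), (n : ℝ) ≤ s ∧
      x ∈ D (θ₁ (-s) ω₁) (θ₂ (-s) ω₂) ∧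
      ε < EMetric.infEdist (Φ s (θ₁ (-s) ω₁) (θ₂ (-s) ω₂) x) S := by
    intro n
    obtain ⟨s, hs, hlt⟩ := hfr (n : ℝ)
    simp only [hausSemidist, lt_iSup_iff] at hlt
    obtain ⟨b, hbF, hblt⟩ := hlt
    obtain ⟨x, hxD, rfl⟩ := hbF
    exact ⟨s, x, hs, hxD, hblt⟩
  choose t x h1 h2 h3 using hsel
  have ht : Tendsto t atTop atTop :=
    tendsto_atTop_mono h1 tendsto_natCast_atTop_atTop
  obtain ⟨φ, w, hφ, hz⟩ := hac ω₁ ω₂ D hD t x ht h2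
  have hwS : w ∈ S := mem_omega (fun n => t (φ n)) (fun n => x (φ n)) w
    (ht.comp hφ.tendsto_atTop) (fun n => h2 (φ n)) hz
  have h0 : Metric.infEDist w S = 0 := EMetric.infEdist_zero_of_mem hwS
  have hlim : Tendsto (fun n => EMetric.infEdist
      (Φ (t (φ n)) (θ₁ (-t (φ n)) ω₁) (θ₂ (-t (φ n)) ω₂) (x (φ n))) S)
      atTop (𝓝 0) := by
    have := Tendsto.comp ((EMetric.continuous_infEdist :
      Continuous fun y : X => EMetric.infEdist y S).tendsto w) hz
    rwa [h0] at this
  have hle : ε ≤ 0 := ge_of_tendsto hlim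
    (Eventually.of_forall fun n => (h3 (φ n)).le)
  exact hε.not_ge hle


end RDS
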